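/- For all points a, b, x ∈ ℝ², the distance from x to the segment from a to b equals the maximum of the distances from x to the two rays spanned by the segment: Metric.infDist x (segment ℝ a b) = max (Metric.infDist x (ray(a,b))) (Metric.infDist x (ray(b,a))). -/

import Mathlib

open Metric

noncomputable section

/-- The Euclidean plane. -/
abbrev Pt : Type := EuclideanSpace ℝ (Fin 2)

/-- The ray emanating from `a` through `b`. -/
def ray (a b : Pt) : Set Pt := {x : Pt | ∃ t : ℝ, 0 ≤ t ∧ x = a + t • (b - a)}

lemma key_norm_le (w v : Pt) (c s : ℝ)
    (h : 0 ≤ (s - c) * ((s + c) * ‖v‖ ^ 2 - 2 * (inner ℝ w v : ℝ))) :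
    ‖w - c • v‖ ≤ ‖w - s • v‖ := by
  have h1 : ‖w - c • v‖ ^ 2 ≤ ‖w - s • v‖ ^ 2 := by
    rw [norm_sub_sq_real, norm_sub_sq_real, real_inner_smul_right, real_inner_smul_right,
      norm_smul, norm_smul]
    simp only [Real.norm_eq_abs, mul_pow, sq_abs]
    nlinarith
  nlinarith [norm_nonneg (w - c • v), norm_nonneg (w - s • v)]

lemma infDist_eq_of_min (x a v : Pt) (S : Set Pt) (c : ℝ)
    (hmem : a + c • v ∈ S)
    (hall : ∀ y ∈ S, ∃ s : ℝ, y = a + s • v ∧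
      0 ≤ (s - c) * ((s + c) * ‖v‖ ^ 2 - 2 * (inner ℝ (x - a) v : ℝ))) :
    Metric.infDist x S = dist x (a + c • v) := by
  refine le_antisymm (infDist_le_dist_of_mem hmem) ?_
  by_contra hlt
  push_neg at hlt
  obtain ⟨y, hy, hylt⟩ := (infDist_lt_iff ⟨_, hmem⟩).mp hlt
  obtain ⟨s, rfl, hs⟩ := hall y hy
  have hd : ∀ r : ℝ, dist x (a + r • v) = ‖(x - a) - r • v‖ := by
    intro r; rw [dist_eq_norm]; congr 1; abel
  rw [hd, hd] at hylt
  exact absurd (key_norm_le _ _ _ _ hs) (not_le.mpr hylt)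

theorem infDist_segment_eq_max_rays (a b x : Pt) :
    Metric.infDist x (segment ℝ a b) =
      max (Metric.infDist x (ray a b)) (Metric.infDist x (ray b a)) := by
  set v : Pt := b - a with hv
  set w : Pt := x - a with hw
  set t₀ : ℝ := (inner ℝ w v : ℝ) / ‖v‖ ^ 2 with ht₀
  have hK : (0:ℝ) ≤ ‖v‖ ^ 2 := by positivity
  have hip : (inner ℝ w v : ℝ) = t₀ * ‖v‖ ^ 2 := by
    by_cases hvz : v = 0
    · simp [hvz, ht₀]
    · have h2 : ‖v‖ ^ 2 ≠ 0 := pow_ne_zero _ (norm_ne_zero_iff.mpr hvz)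
      rw [ht₀]; field_simp
  -- segment
  have hseg : Metric.infDist x (segment ℝ a b) = dist x (a + (min (max t₀ 0) 1) • v) := by
    apply infDist_eq_of_min
    · rw [segment_eq_image']
      exact ⟨min (max t₀ 0) 1, ⟨le_min (le_max_right _ _) zero_le_one, min_le_right _ _⟩, rfl⟩
    · intro y hy
      rw [segment_eq_image'] at hy
      obtain ⟨s, ⟨hs0, hs1⟩, rfl⟩ := hy
      refine ⟨s, rfl, ?_⟩
      rw [hip]
      rcases le_or_gt t₀ 0 with h0 | h0
      · rw [max_eq_right h0, min_eq_left zero_le_one]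
        nlinarith [mul_nonneg hK (mul_nonneg hs0 (show (0:ℝ) ≤ s - 2*t₀ by linarith))]
      · rcases le_or_gt t₀ 1 with h1 | h1
        · rw [max_eq_left h0.le, min_eq_left h1]
          nlinarith [sq_nonneg (s - t₀), mul_nonneg (sq_nonneg (s - t₀)) hK]
        · rw [max_eq_left h0.le, min_eq_right h1.le]
          nlinarith [mul_nonneg hK (mul_nonneg (show (0:ℝ) ≤ 1 - s by linarith)
            (show (0:ℝ) ≤ 2*t₀ - s - 1 by linarith))]
  -- ray a b
  have hab : Metric.infDist x (ray a b) = dist x (a + (max t₀ 0) • v) := by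
    apply infDist_eq_of_min
    · exact ⟨max t₀ 0, le_max_right _ _, rfl⟩
    · rintro y ⟨s, hs0, rfl⟩
      refine ⟨s, rfl, ?_⟩
      rw [hip]
      rcases le_or_gt t₀ 0 with h0 | h0
      · rw [max_eq_right h0]
        nlinarith [mul_nonneg hK (mul_nonneg hs0 (show (0:ℝ) ≤ s - 2*t₀ by linarith))]
      · rw [max_eq_left h0.le]; nlinarith [mul_nonneg (sq_nonneg (s - t₀)) hK]
  -- ray b a
  have hba : Metric.infDist x (ray b a) = dist x (a + (min t₀ 1) • v) := by
    apply infDist_eq_of_min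
    · refine ⟨1 - min t₀ 1, by simp, ?_⟩
      rw [hv]; module
    · rintro y ⟨t, ht0, rfl⟩
      refine ⟨1 - t, by rw [hv]; module, ?_⟩
      rw [hip]
      rcases le_or_gt t₀ 1 with h1 | h1
      · rw [min_eq_left h1]; nlinarith [mul_nonneg (sq_nonneg (1 - t - t₀)) hK]
      · rw [min_eq_right h1.le]
        nlinarith [mul_nonneg hK (mul_nonneg ht0 (show (0:ℝ) ≤ t + 2*t₀ - 2 by linarith))]
  rw [hseg, hab, hba]
  have hd : ∀ r : ℝ, dist x (a + r • v) = ‖w - r • v‖ := by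
    intro r; rw [dist_eq_norm]; congr 1; rw [hw]; abel
  rcases le_or_gt t₀ 0 with h0 | h0
  · rw [max_eq_right h0, min_eq_left zero_le_one, min_eq_left (h0.trans zero_le_one)]
    rw [max_eq_left]
    rw [hd, hd]
    apply key_norm_le
    rw [hip]
    nlinarith [mul_nonneg (sq_nonneg t₀) hK]
  · rcases le_or_gt t₀ 1 with h1 | h1
    · rw [max_eq_left h0.le, min_eq_left h1, max_self]
    · rw [max_eq_left h0.le, min_eq_right h1.le]
      rw [max_eq_right]
      rw [hd, hd]
      apply key_norm_le
      rw [hip]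
      nlinarith [mul_nonneg (sq_nonneg (1 - t₀)) hK]
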